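/- Let A ∈ ℝ^{n×n}, B ∈ ℝ^{n×p}, C ∈ ℝ^{s×n}, and define φ̄ : ℝ^{n×r} → ℝ by φ̄(Y) = (1/4) ‖Aᵀ Y Yᵀ + Y Yᵀ A + Y Yᵀ B Bᵀ Y Yᵀ − Cᵀ C‖_F². Then φ̄ is differentiable at every Y ∈ ℝ^{n×r}, and its Euclidean gradient is Grad_Y φ̄ = (A R + R Aᵀ + B Bᵀ X R + R X B Bᵀ) Y, where X = Y Yᵀ and R = Aᵀ X + X A + X B Bᵀ X − Cᵀ C; i.e., the derivative of φ̄ at Y in any direction Z ∈ ℝ^{n×r} equals Trace(((A R + R Aᵀ + B Bᵀ X R + R X B Bᵀ) Y)ᵀ Z). -/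

import Mathlib

open Matrix

attribute [local instance] Matrix.normedAddCommGroup Matrix.normedSpace

/-- The residual `R(X) = Aᵀ X + X A + X B Bᵀ X − Cᵀ C`. -/
noncomputable def resid {n p s : ℕ} (A : Matrix (Fin n) (Fin n) ℝ)
    (B : Matrix (Fin n) (Fin p) ℝ) (C : Matrix (Fin s) (Fin n) ℝ)
    (X : Matrix (Fin n) (Fin n) ℝ) : Matrix (Fin n) (Fin n) ℝ :=
  Aᵀ * X + X * A + X * B * Bᵀ * X - Cᵀ * C

/-- The fixed-rank cost on factors `φ̄(Y) = (1/4) ‖R(Y Yᵀ)‖_F²`. -/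
noncomputable def phibar {n p s r : ℕ} (A : Matrix (Fin n) (Fin n) ℝ)
    (B : Matrix (Fin n) (Fin p) ℝ) (C : Matrix (Fin s) (Fin n) ℝ)
    (Y : Matrix (Fin n) (Fin r) ℝ) : ℝ :=
  (1 / 4) * Matrix.trace ((resid A B C (Y * Yᵀ))ᵀ * resid A B C (Y * Yᵀ))

/-! ### Auxiliary calculus infrastructure for matrix-valued functions -/

/-- Matrix multiplication as a continuous bilinear map. -/
noncomputable def mulL (a b c : ℕ) :
    Matrix (Fin a) (Fin b) ℝ →L[ℝ] Matrix (Fin b) (Fin c) ℝ →L[ℝ] Matrix (Fin a) (Fin c) ℝ :=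
  LinearMap.toContinuousLinearMap
  { toFun := fun X => LinearMap.toContinuousLinearMap
      { toFun := fun Y => X * Y
        map_add' := fun _ _ => Matrix.mul_add _ _ _
        map_smul' := fun _ _ => Matrix.mul_smul _ _ _ }
    map_add' := fun X X' => by
      ext Y i j
      simp [Matrix.add_mul, Matrix.add_apply]
    map_smul' := fun c X => by
      ext Y i j
      simp [Matrix.smul_mul, Matrix.smul_apply] }

@[simp] lemma mulL_apply {a b c : ℕ} (X : Matrix (Fin a) (Fin b) ℝ)
    (Y : Matrix (Fin b) (Fin c) ℝ) : mulL a b c X Y = X * Y := rfl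

lemma HasDerivAt.matmul {a b c : ℕ} {u : ℝ → Matrix (Fin a) (Fin b) ℝ}
    {v : ℝ → Matrix (Fin b) (Fin c) ℝ} {u' v'} {t : ℝ}
    (hu : HasDerivAt u u' t) (hv : HasDerivAt v v' t) :
    HasDerivAt (fun t => u t * v t) (u' * v t + u t * v') t := by
  have h1 := ((mulL a b c).isBoundedBilinearMap.hasFDerivAt (u t, v t)).comp_hasDerivAt t
    (hu.prodMk hv)
  exact h1.congr_deriv (by rw [IsBoundedBilinearMap.deriv_apply, add_comm]; rfl)

/-- Transpose as a continuous linear map. -/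
noncomputable def transposeL (a b : ℕ) :
    Matrix (Fin a) (Fin b) ℝ →L[ℝ] Matrix (Fin b) (Fin a) ℝ :=
  LinearMap.toContinuousLinearMap
  { toFun := fun X => Xᵀ
    map_add' := fun _ _ => Matrix.transpose_add _ _
    map_smul' := fun _ _ => Matrix.transpose_smul _ _ }

@[simp] lemma transposeL_apply {a b : ℕ} (X : Matrix (Fin a) (Fin b) ℝ) :
    transposeL a b X = Xᵀ := rfl

/-- Trace as a continuous linear map. -/
noncomputable def traceL (a : ℕ) : Matrix (Fin a) (Fin a) ℝ →L[ℝ] ℝ :=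
  LinearMap.toContinuousLinearMap (Matrix.traceLinearMap (Fin a) ℝ ℝ)

@[simp] lemma traceL_apply {a : ℕ} (X : Matrix (Fin a) (Fin a) ℝ) :
    traceL a X = Matrix.trace X := rfl

lemma HasDerivAt.mtranspose {a b : ℕ} {u : ℝ → Matrix (Fin a) (Fin b) ℝ} {u'} {t : ℝ}
    (hu : HasDerivAt u u' t) : HasDerivAt (fun t => (u t)ᵀ) u'ᵀ t :=
  (transposeL a b).hasFDerivAt.comp_hasDerivAt t hu

lemma HasDerivAt.mtrace {a : ℕ} {u : ℝ → Matrix (Fin a) (Fin a) ℝ} {u'} {t : ℝ}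
    (hu : HasDerivAt u u' t) : HasDerivAt (fun t => Matrix.trace (u t)) (Matrix.trace u') t :=
  (traceL a).hasFDerivAt.comp_hasDerivAt t hu

lemma Differentiable.matmul {E : Type*} [NormedAddCommGroup E] [NormedSpace ℝ E]
    {a b c : ℕ} {f : E → Matrix (Fin a) (Fin b) ℝ} {g : E → Matrix (Fin b) (Fin c) ℝ}
    (hf : Differentiable ℝ f) (hg : Differentiable ℝ g) :
    Differentiable ℝ (fun x => f x * g x) := fun x => by
  have h := ((mulL a b c).isBoundedBilinearMap.differentiableAt (p := (f x, g x))).comp x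
    ((hf x).prodMk (hg x))
  exact h

lemma Differentiable.mtranspose {E : Type*} [NormedAddCommGroup E] [NormedSpace ℝ E]
    {a b : ℕ} {f : E → Matrix (Fin a) (Fin b) ℝ} (hf : Differentiable ℝ f) :
    Differentiable ℝ (fun x => (f x)ᵀ) :=
  (transposeL a b).differentiable.comp hf

lemma Differentiable.mtrace {E : Type*} [NormedAddCommGroup E] [NormedSpace ℝ E]
    {a : ℕ} {f : E → Matrix (Fin a) (Fin a) ℝ} (hf : Differentiable ℝ f) :
    Differentiable ℝ (fun x => Matrix.trace (f x)) :=
  (traceL a).differentiable.comp hf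

lemma HasDerivAt.const_matmul {a b c : ℕ} {v : ℝ → Matrix (Fin b) (Fin c) ℝ} {v'} {t : ℝ}
    (M : Matrix (Fin a) (Fin b) ℝ) (hv : HasDerivAt v v' t) :
    HasDerivAt (fun t => M * v t) (M * v') t := by
  simpa using (hasDerivAt_const t M).matmul hv

lemma HasDerivAt.matmul_const {a b c : ℕ} {u : ℝ → Matrix (Fin a) (Fin b) ℝ} {u'} {t : ℝ}
    (hu : HasDerivAt u u' t) (M : Matrix (Fin b) (Fin c) ℝ) :
    HasDerivAt (fun t => u t * M) (u' * M) t := by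
  simpa using hu.matmul (hasDerivAt_const t M)

/-! ### Trace gymnastics -/

lemma trL {n r : ℕ} (P : Matrix (Fin n) (Fin n) ℝ) (Y Z : Matrix (Fin n) (Fin r) ℝ) :
    Matrix.trace (P * (Z * Yᵀ)) = Matrix.trace (Yᵀ * (P * Z)) := by
  rw [show P * (Z * Yᵀ) = (P * Z) * Yᵀ from (Matrix.mul_assoc _ _ _).symm,
    Matrix.trace_mul_comm]

lemma trR {n r : ℕ} (P : Matrix (Fin n) (Fin n) ℝ) (Y Z : Matrix (Fin n) (Fin r) ℝ) :
    Matrix.trace (P * (Y * Zᵀ)) = Matrix.trace (Yᵀ * (Pᵀ * Z)) := by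
  calc Matrix.trace (P * (Y * Zᵀ)) = Matrix.trace ((P * Y) * Zᵀ) := by rw [Matrix.mul_assoc]
    _ = Matrix.trace (Zᵀ * (P * Y)) := Matrix.trace_mul_comm _ _
    _ = Matrix.trace ((Zᵀ * (P * Y))ᵀ) := (Matrix.trace_transpose _).symm
    _ = Matrix.trace ((Yᵀ * Pᵀ) * Z) := by simp [Matrix.transpose_mul]
    _ = Matrix.trace (Yᵀ * (Pᵀ * Z)) := by rw [Matrix.mul_assoc]

lemma trH {n r : ℕ} (Q : Matrix (Fin n) (Fin n) ℝ) (Y Z : Matrix (Fin n) (Fin r) ℝ) :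
    Matrix.trace (Q * (Z * Yᵀ + Y * Zᵀ)) =
      Matrix.trace (Yᵀ * (Q * Z)) + Matrix.trace (Yᵀ * (Qᵀ * Z)) := by
  rw [Matrix.mul_add, Matrix.trace_add, trL, trR]

lemma key (n p s r : ℕ) (A : Matrix (Fin n) (Fin n) ℝ)
    (B : Matrix (Fin n) (Fin p) ℝ) (C : Matrix (Fin s) (Fin n) ℝ)
    (Y Z : Matrix (Fin n) (Fin r) ℝ) :
    (1/4 : ℝ) * Matrix.trace
        ((Aᵀ * (Z * Yᵀ + Y * Zᵀ) + (Z * Yᵀ + Y * Zᵀ) * A +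
          ((Z * Yᵀ + Y * Zᵀ) * B * Bᵀ * (Y * Yᵀ) + Y * Yᵀ * (B * Bᵀ * (Z * Yᵀ + Y * Zᵀ))))ᵀ *
            resid A B C (Y * Yᵀ) +
         (resid A B C (Y * Yᵀ))ᵀ *
          (Aᵀ * (Z * Yᵀ + Y * Zᵀ) + (Z * Yᵀ + Y * Zᵀ) * A +
          ((Z * Yᵀ + Y * Zᵀ) * B * Bᵀ * (Y * Yᵀ) + Y * Yᵀ * (B * Bᵀ * (Z * Yᵀ + Y * Zᵀ))))) =
    Matrix.trace
      (((A * resid A B C (Y * Yᵀ) + resid A B C (Y * Yᵀ) * Aᵀ +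
          B * Bᵀ * (Y * Yᵀ) * resid A B C (Y * Yᵀ) +
          resid A B C (Y * Yᵀ) * (Y * Yᵀ) * B * Bᵀ) * Y)ᵀ * Z) := by
  have hR : (resid A B C (Y * Yᵀ))ᵀ = resid A B C (Y * Yᵀ) := by
    simp [resid, Matrix.transpose_add, Matrix.transpose_sub, Matrix.transpose_mul,
      Matrix.transpose_transpose, Matrix.mul_assoc]
    abel
  set R := resid A B C (Y * Yᵀ) with hRdef
  set D := Aᵀ * (Z * Yᵀ + Y * Zᵀ) + (Z * Yᵀ + Y * Zᵀ) * A +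
      ((Z * Yᵀ + Y * Zᵀ) * B * Bᵀ * (Y * Yᵀ) + Y * Yᵀ * (B * Bᵀ * (Z * Yᵀ + Y * Zᵀ))) with hD
  have q1 : (R * Aᵀ)ᵀ = A * R := by
    rw [Matrix.transpose_mul, Matrix.transpose_transpose, hR]
  have q2 : (A * R)ᵀ = R * Aᵀ := by
    rw [Matrix.transpose_mul, hR]
  have q3 : (B * Bᵀ * (Y * Yᵀ) * R)ᵀ = R * (Y * Yᵀ) * B * Bᵀ := by
    simp [Matrix.transpose_mul, Matrix.transpose_transpose, hR, Matrix.mul_assoc]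
  have q4 : (R * (Y * Yᵀ) * B * Bᵀ)ᵀ = B * Bᵀ * (Y * Yᵀ) * R := by
    simp [Matrix.transpose_mul, Matrix.transpose_transpose, hR, Matrix.mul_assoc]
  rw [Matrix.trace_add]
  have e1 : Matrix.trace (Dᵀ * R) = Matrix.trace (Rᵀ * D) := by
    rw [← Matrix.trace_transpose (Dᵀ * R), Matrix.transpose_mul, Matrix.transpose_transpose]
  rw [e1, hR]
  have h1 : Matrix.trace (R * (Aᵀ * (Z * Yᵀ + Y * Zᵀ))) =
      Matrix.trace (Yᵀ * ((R * Aᵀ) * Z)) + Matrix.trace (Yᵀ * ((R * Aᵀ)ᵀ * Z)) := by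
    rw [← Matrix.mul_assoc, trH]
  have h2 : Matrix.trace (R * ((Z * Yᵀ + Y * Zᵀ) * A)) =
      Matrix.trace (Yᵀ * ((A * R) * Z)) + Matrix.trace (Yᵀ * ((A * R)ᵀ * Z)) := by
    rw [← Matrix.mul_assoc, Matrix.trace_mul_comm, ← Matrix.mul_assoc, trH]
  have h3 : Matrix.trace (R * ((Z * Yᵀ + Y * Zᵀ) * B * Bᵀ * (Y * Yᵀ))) =
      Matrix.trace (Yᵀ * ((B * Bᵀ * (Y * Yᵀ) * R) * Z)) +
        Matrix.trace (Yᵀ * ((B * Bᵀ * (Y * Yᵀ) * R)ᵀ * Z)) := by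
    rw [Matrix.trace_mul_comm,
      show (Z * Yᵀ + Y * Zᵀ) * B * Bᵀ * (Y * Yᵀ) * R
          = (Z * Yᵀ + Y * Zᵀ) * (B * Bᵀ * (Y * Yᵀ) * R) from by
        simp [Matrix.mul_assoc],
      Matrix.trace_mul_comm, trH]
  have h4 : Matrix.trace (R * (Y * Yᵀ * (B * Bᵀ * (Z * Yᵀ + Y * Zᵀ)))) =
      Matrix.trace (Yᵀ * ((R * (Y * Yᵀ) * B * Bᵀ) * Z)) +
        Matrix.trace (Yᵀ * ((R * (Y * Yᵀ) * B * Bᵀ)ᵀ * Z)) := by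
    rw [show R * (Y * Yᵀ * (B * Bᵀ * (Z * Yᵀ + Y * Zᵀ)))
          = (R * (Y * Yᵀ) * B * Bᵀ) * (Z * Yᵀ + Y * Zᵀ) from by
        simp [Matrix.mul_assoc, Matrix.mul_add],
      trH]
  have hsplit : Matrix.trace (R * D) =
      Matrix.trace (R * (Aᵀ * (Z * Yᵀ + Y * Zᵀ))) +
      Matrix.trace (R * ((Z * Yᵀ + Y * Zᵀ) * A)) +
      (Matrix.trace (R * ((Z * Yᵀ + Y * Zᵀ) * B * Bᵀ * (Y * Yᵀ))) +
       Matrix.trace (R * (Y * Yᵀ * (B * Bᵀ * (Z * Yᵀ + Y * Zᵀ))))) := by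
    rw [hD]
    simp only [Matrix.mul_add, Matrix.trace_add]
  have hRHS : Matrix.trace
      (((A * R + R * Aᵀ + B * Bᵀ * (Y * Yᵀ) * R + R * (Y * Yᵀ) * B * Bᵀ) * Y)ᵀ * Z) =
      Matrix.trace (Yᵀ * ((R * Aᵀ) * Z)) + Matrix.trace (Yᵀ * ((A * R) * Z)) +
      Matrix.trace (Yᵀ * ((R * (Y * Yᵀ) * B * Bᵀ) * Z)) +
      Matrix.trace (Yᵀ * ((B * Bᵀ * (Y * Yᵀ) * R) * Z)) := by
    rw [Matrix.transpose_mul, Matrix.mul_assoc, Matrix.transpose_add, Matrix.transpose_add,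
      Matrix.transpose_add, q1, q2, q3, q4]
    simp only [Matrix.add_mul, Matrix.mul_add, Matrix.trace_add]
  rw [hsplit, h1, h2, h3, h4, q1, q2, q3, q4, hRHS]
  ring

/-- `φ̄` is differentiable everywhere, and its Euclidean gradient at `Y` is
`(A R + R Aᵀ + B Bᵀ X R + R X B Bᵀ) Y` with `X = Y Yᵀ` and `R = R(X)`: the derivative in
direction `Z` equals the Frobenius inner product of the gradient with `Z`. -/
theorem stmt_14 (n p s r : ℕ) (A : Matrix (Fin n) (Fin n) ℝ)
    (B : Matrix (Fin n) (Fin p) ℝ) (C : Matrix (Fin s) (Fin n) ℝ) :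
    Differentiable ℝ (phibar A B C (r := r)) ∧
    ∀ Y Z : Matrix (Fin n) (Fin r) ℝ,
      HasDerivAt (fun t : ℝ => phibar A B C (Y + t • Z))
        (Matrix.trace
          (((A * resid A B C (Y * Yᵀ) + resid A B C (Y * Yᵀ) * Aᵀ +
              B * Bᵀ * (Y * Yᵀ) * resid A B C (Y * Yᵀ) +
              resid A B C (Y * Yᵀ) * (Y * Yᵀ) * B * Bᵀ) * Y)ᵀ * Z)) 0 := by
  constructor
  · -- differentiability
    have hid : Differentiable ℝ (fun Y : Matrix (Fin n) (Fin r) ℝ => Y) := differentiable_id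
    have hX : Differentiable ℝ (fun Y : Matrix (Fin n) (Fin r) ℝ => Y * Yᵀ) :=
      hid.matmul hid.mtranspose
    have hres : Differentiable ℝ (fun Y : Matrix (Fin n) (Fin r) ℝ => resid A B C (Y * Yᵀ)) := by
      have h1 : Differentiable ℝ (fun Y : Matrix (Fin n) (Fin r) ℝ => Aᵀ * (Y * Yᵀ)) :=
        (differentiable_const Aᵀ).matmul hX
      have h2 : Differentiable ℝ (fun Y : Matrix (Fin n) (Fin r) ℝ => (Y * Yᵀ) * A) :=
        hX.matmul (differentiable_const A)
      have h3 : Differentiable ℝ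
          (fun Y : Matrix (Fin n) (Fin r) ℝ => ((Y * Yᵀ) * B * Bᵀ) * (Y * Yᵀ)) :=
        ((hX.matmul (differentiable_const B)).matmul (differentiable_const Bᵀ)).matmul hX
      have h4 := ((h1.add h2).add h3).sub (differentiable_const (Cᵀ * C))
      exact h4
    have := ((hres.mtranspose.matmul hres).mtrace).const_mul (1/4 : ℝ)
    exact this
  · intro Y Z
    have hY : HasDerivAt (fun t : ℝ => Y + t • Z) Z 0 := by
      exact (((hasDerivAt_id (0:ℝ)).smul_const Z).const_add Y).congr_deriv (one_smul ℝ Z)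
    have hYT : HasDerivAt (fun t : ℝ => (Y + t • Z)ᵀ) Zᵀ 0 := hY.mtranspose
    have hX : HasDerivAt (fun t : ℝ => (Y + t • Z) * (Y + t • Z)ᵀ) (Z * Yᵀ + Y * Zᵀ) 0 := by
      simpa using hY.matmul hYT
    have hF : HasDerivAt (fun t : ℝ => resid A B C ((Y + t • Z) * (Y + t • Z)ᵀ))
        (Aᵀ * (Z * Yᵀ + Y * Zᵀ) + (Z * Yᵀ + Y * Zᵀ) * A +
          ((Z * Yᵀ + Y * Zᵀ) * B * Bᵀ * (Y * Yᵀ) + Y * Yᵀ * (B * Bᵀ * (Z * Yᵀ + Y * Zᵀ)))) 0 := by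
      have h1 := HasDerivAt.const_matmul Aᵀ hX
      have h2 := hX.matmul_const A
      have h3 := ((hX.matmul_const B).matmul_const Bᵀ).matmul hX
      have h4 := ((h1.add h2).add h3).sub_const (Cᵀ * C)
      exact h4.congr_deriv (by simp [Matrix.mul_assoc])
    have hFT := hF.mtranspose
    have hphi := ((hFT.matmul hF).mtrace).const_mul (1/4 : ℝ)
    have hphi2 : HasDerivAt (fun t : ℝ => phibar A B C (Y + t • Z))
        ((1/4 : ℝ) * Matrix.trace
          ((Aᵀ * (Z * Yᵀ + Y * Zᵀ) + (Z * Yᵀ + Y * Zᵀ) * A +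
            ((Z * Yᵀ + Y * Zᵀ) * B * Bᵀ * (Y * Yᵀ) + Y * Yᵀ * (B * Bᵀ * (Z * Yᵀ + Y * Zᵀ))))ᵀ *
              resid A B C (Y * Yᵀ) +
           (resid A B C (Y * Yᵀ))ᵀ *
            (Aᵀ * (Z * Yᵀ + Y * Zᵀ) + (Z * Yᵀ + Y * Zᵀ) * A +
            ((Z * Yᵀ + Y * Zᵀ) * B * Bᵀ * (Y * Yᵀ) + Y * Yᵀ * (B * Bᵀ * (Z * Yᵀ + Y * Zᵀ)))))) 0 := by
      simpa [phibar, Matrix.mul_assoc] using hphi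
    rw [← key n p s r A B C Y Z]
    exact hphi2
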